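/- In k_E⁺ = k[[t]] with the operator ψ^r defined as the k-linear left inverse of φ^r (where φ^r(t) = (1+t)^{p^r} - 1) with kernel the span of t^i φ^r(k_E⁺) for i not divisible appropriately, one has: for 0 ≤ n_0,…,n_{r-1} ≤ p-1 and 0 ≤ n_r, ψ^r(t^{n_0 + n_1 p + … + n_r p^r}) = (-1)^{n_0 + … + n_{r-1}} t^{n_r}. -/

import Mathlib

/-- The explicit formula for the operator `ψ^r` on `k[[t]]`: for digits
`0 ≤ n_0, …, n_{r-1} ≤ p-1` and any `n_r ≥ 0`,
`ψ^r(t^{n_0 + n_1 p + … + n_r p^r}) = (-1)^{n_0 + … + n_{r-1}} t^{n_r}`.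
Here `ψ^r` is the `k`-linear left inverse of `φ^r` (the substitution
`t ↦ (1+t)^{p^r} - 1`) killing `(1+t)^i φ^r(k[[t]])` for `0 < i < p^r`. -/
theorem stmt11 (p : ℕ) [Fact p.Prime] (k : Type*) [Field k] [CharP k p]
    (r : ℕ) (hr : 0 < r)
    (φ : PowerSeries k →ₐ[k] PowerSeries k)
    (hφX : φ PowerSeries.X = (1 + PowerSeries.X) ^ (p ^ r) - 1)
    (ψ : PowerSeries k →ₗ[k] PowerSeries k)
    (hψφ : ∀ f : PowerSeries k, ψ (φ f) = f)
    (hψ0 : ∀ i : ℕ, 0 < i → i < p ^ r →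
      ∀ f : PowerSeries k, ψ ((1 + PowerSeries.X) ^ i * φ f) = 0)
    (n : ℕ → ℕ) (hn : ∀ i, i < r → n i ≤ p - 1) :
    ψ (PowerSeries.X ^ (∑ i ∈ Finset.range (r + 1), n i * p ^ i))
      = (-1 : k) ^ (∑ i ∈ Finset.range r, n i) • (PowerSeries.X : PowerSeries k) ^ (n r) := by
  classical
  haveI : CharP (PowerSeries k) p :=
    charP_of_injective_algebraMap' (A := PowerSeries k) k p
  have hp := (Fact.out : p.Prime)
  -- φ X = X ^ (p^r)
  have hX : φ PowerSeries.X = PowerSeries.X ^ (p ^ r) := by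
    rw [hφX, add_pow_char_pow, one_pow, add_sub_cancel_left]
  -- key lemma: for a < p^r, ψ (X^a * φ f) = (-1)^a • f
  have key : ∀ a : ℕ, a < p ^ r → ∀ f : PowerSeries k,
      ψ (PowerSeries.X ^ a * φ f) = ((-1 : k) ^ a) • f := by
    intro a ha f
    have hXa : (PowerSeries.X : PowerSeries k) ^ a
        = ∑ m ∈ Finset.range (a + 1),
            ((-1 : k) ^ (m + a) * (a.choose m : k)) • (1 + PowerSeries.X) ^ m := by
      have h := sub_pow (1 + PowerSeries.X : PowerSeries k) 1 a
      rw [add_sub_cancel_left] at h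
      rw [h]
      refine Finset.sum_congr rfl fun m _ => ?_
      rw [PowerSeries.smul_eq_C_mul, map_mul, map_pow, map_neg, map_one, map_natCast]
      ring
    rw [hXa, Finset.sum_mul, map_sum]
    rw [Finset.sum_eq_single 0]
    · simp [smul_mul_assoc, hψφ]
    · intro m hm hm0
      rw [smul_mul_assoc, map_smul, hψ0 m (Nat.pos_of_ne_zero hm0)
        (lt_of_le_of_lt (Nat.lt_succ_iff.mp (Finset.mem_range.mp hm)) ha), smul_zero]
    · intro h; exact absurd (Finset.mem_range.mpr (Nat.succ_pos a)) h
  -- the prefix sum is < p^r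
  have hlt : ∀ s : ℕ, (∀ i, i < s → n i ≤ p - 1) →
      (∑ i ∈ Finset.range s, n i * p ^ i) < p ^ s := by
    intro s
    induction s with
    | zero => simp
    | succ s ih =>
      intro h
      have h1 := ih fun i hi => h i (hi.trans (Nat.lt_succ_self s))
      have h2 : n s ≤ p - 1 := h s (Nat.lt_succ_self s)
      have hp1 : 1 ≤ p := hp.one_lt.le
      have h3 : n s * p ^ s ≤ (p - 1) * p ^ s := Nat.mul_le_mul_right _ h2
      have h4 : (p - 1) * p ^ s + p ^ s = p ^ (s + 1) := by
        rw [pow_succ]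
        cases p with
        | zero => omega
        | succ q => simp [Nat.succ_sub_one]; ring
      rw [Finset.sum_range_succ]
      omega
  set a := ∑ i ∈ Finset.range r, n i * p ^ i with ha_def
  have hsum : (∑ i ∈ Finset.range (r + 1), n i * p ^ i) = a + n r * p ^ r := by
    rw [Finset.sum_range_succ]
  have hφpow : φ (PowerSeries.X ^ n r) = PowerSeries.X ^ (n r * p ^ r) := by
    rw [map_pow, hX, ← pow_mul, mul_comm]
  have := key a (hlt r hn) (PowerSeries.X ^ n r)
  rw [hφpow] at this
  rw [hsum, pow_add, this]
  congr 1
  -- (-1)^a = (-1)^(∑ n i)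
  rw [ha_def, ← Finset.prod_pow_eq_pow_sum, ← Finset.prod_pow_eq_pow_sum]
  refine Finset.prod_congr rfl fun i _ => ?_
  rw [mul_comm, pow_mul, neg_one_pow_char_pow k p]
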